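/- arXiv:1311.2232 — 7 statements merged into one kernel-verified Lean document; each statement's English description precedes it below -/
import Mathlib

section
/- Let Γ be a finite simplicial graph with vertex set V. Let a, b ∈ V be distinct and non-adjacent, let K be a connected component of Γ∖st(a), and let L be a connected component of Γ∖st(b). If b ∉ K, then either K ∩ L = ∅ or K ⊆ L (as sets of vertices). -/
open SimpleGraph

/-- The star of a vertex: the vertex together with its neighbours. -/
def Gstar {V : Type} (Γ : SimpleGraph V) (a : V) : Set V := insert a (Γ.neighborSet a)

/-- The set of vertices whose star is the whole vertex set. -/
def Zset {V : Type} (Γ : SimpleGraph V) : Set V := {v | Gstar Γ v = Set.univ}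

/-- `K` is (the vertex set of) a connected component of the full subgraph of `Γ`
induced on the vertex set `S`. -/
def IsCompOf {V : Type} (Γ : SimpleGraph V) (S K : Set V) : Prop :=
  ∃ c : (Γ.induce S).ConnectedComponent, K = Subtype.val '' c.supp

/-- The defining relators of the right-angled Artin group of `Γ`. -/
def raagRels {V : Type} (Γ : SimpleGraph V) : Set (FreeGroup V) :=
  {r | ∃ a b : V, Γ.Adj a b ∧
    r = FreeGroup.of a * FreeGroup.of b * (FreeGroup.of a)⁻¹ * (FreeGroup.of b)⁻¹}

/-- The right-angled Artin group `A(Γ)`. -/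
abbrev RAAG {V : Type} (Γ : SimpleGraph V) : Type := PresentedGroup (raagRels Γ)

/-- The generator of `A(Γ)` corresponding to a vertex `v`. -/
def raagGen {V : Type} (Γ : SimpleGraph V) (v : V) : RAAG Γ := PresentedGroup.of v

/-- The pure symmetric automorphism group: automorphisms sending each standard
generator to a conjugate of itself. -/
def PSA {V : Type} (Γ : SimpleGraph V) : Subgroup (MulAut (RAAG Γ)) where
  carrier := {φ | ∀ v : V, IsConj (raagGen Γ v) (φ (raagGen Γ v))}
  one_mem' := fun v => IsConj.refl _
  mul_mem' := by
    intro φ ψ hφ hψ v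
    have h2 : IsConj (φ (raagGen Γ v)) (φ (ψ (raagGen Γ v))) :=
      φ.toMonoidHom.map_isConj (hψ v)
    simpa [MulAut.mul_apply] using (hφ v).trans h2
  inv_mem' := by
    intro φ hφ v
    have h := (φ⁻¹ : MulAut (RAAG _)).toMonoidHom.map_isConj (hφ v)
    simp only [MulEquiv.toMonoidHom_eq_coe, MonoidHom.coe_coe, MulAut.inv_def,
      MulEquiv.symm_apply_apply] at h
    exact h.symm

/-- `φ` is the partial conjugation `π_{a,K}`. -/
def IsPartialConj {V : Type} (Γ : SimpleGraph V) (a : V) (K : Set V)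
    (φ : MulAut (RAAG Γ)) : Prop :=
  IsCompOf Γ (Gstar Γ a)ᶜ K ∧
  (∀ v ∈ K, φ (raagGen Γ v) = (raagGen Γ a)⁻¹ * raagGen Γ v * raagGen Γ a) ∧
  (∀ v ∉ K, φ (raagGen Γ v) = raagGen Γ v)

/-- Combinatorial data (acting letter, domain) of the partial conjugations. -/
def PCSet {V : Type} (Γ : SimpleGraph V) : Set (V × Set V) :=
  {p | IsCompOf Γ (Gstar Γ p.1)ᶜ p.2}

/-- A non-trivial admissible partition (for p-sets). -/
def IsAdmissiblePartition {V : Type} (Q₁ Q₂ : Set (V × Set V)) : Prop :=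
  Disjoint Q₁ Q₂ ∧ Q₁.Nonempty ∧ Q₂.Nonempty ∧
    ∀ p ∈ Q₁, ∀ q ∈ Q₂, p.1 ∈ q.2 ∧ q.1 ∈ p.2

/-- A p-set of partial conjugations. -/
def IsPSet {V : Type} (Γ : SimpleGraph V) (Q : Set (V × Set V)) : Prop :=
  Q ⊆ PCSet Γ ∧
  (∀ a : V, {p ∈ Q | p.1 = a}.Subsingleton) ∧
  ∃ Q₁ Q₂ : Set (V × Set V), Q₁ ∪ Q₂ = Q ∧ IsAdmissiblePartition Q₁ Q₂

/-- A non-trivial admissible partition (for δ-p-sets). -/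
def IsDeltaAdmissiblePartition {V : Type} (Q₁ Q₂ : Set (V × Set V)) : Prop :=
  Disjoint Q₁ Q₂ ∧ Q₁.Nonempty ∧ Q₂.Nonempty ∧
    ∀ p ∈ Q₁, ∀ q ∈ Q₂, p.1 ∈ q.2 ∨ q.1 ∈ p.2 ∨ p.2 = q.2

/-- A δ-p-set of partial conjugations. -/
def IsDeltaPSet {V : Type} (Γ : SimpleGraph V) (Q : Set (V × Set V)) : Prop :=
  Q ⊆ PCSet Γ ∧
  (∀ a : V, a ∉ Zset Γ →
    ({p ∈ Q | p.1 = a}.ncard = 0 ∨ {p ∈ Q | p.1 = a}.ncard = 2)) ∧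
  ∃ Q₁ Q₂ : Set (V × Set V), Q₁ ∪ Q₂ = Q ∧ IsDeltaAdmissiblePartition Q₁ Q₂

/-- `Γ` has a separating intersection of links. -/
def HasSIL {V : Type} (Γ : SimpleGraph V) : Prop :=
  ∃ a b : V, a ≠ b ∧ ¬Γ.Adj a b ∧
    ∃ M : Set V, IsCompOf Γ (Γ.neighborSet a ∩ Γ.neighborSet b)ᶜ M ∧ a ∉ M ∧ b ∉ M

/-- The full subgraph spanned by `U` is dominating. -/
def Dominating {V : Type} (Γ : SimpleGraph V) (U : Set V) : Prop :=
  ∀ v : V, v ∈ U ∨ ∃ u ∈ U, Γ.Adj v u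

/-- The full subgraph spanned by `U` is disconnected or non-dominating. -/
def Missing {V : Type} (Γ : SimpleGraph V) (U : Set V) : Prop :=
  ¬(Γ.induce U).Connected ∨ ¬Dominating Γ U

lemma reachable_of_mem_support' {V : Type} {G : SimpleGraph V} :
    ∀ {u v : V} (w : G.Walk u v) (p : V), p ∈ w.support → G.Reachable u p := by
  intro u v w
  induction w with
  | nil => intro p hp; simp at hp; subst hp; exact Reachable.refl _
  | cons h w ih =>
      intro p hp
      rw [SimpleGraph.Walk.support_cons, List.mem_cons] at hp
      rcases hp with hp | hp
      · subst hp; exact Reachable.refl _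
      · exact (h.reachable).trans (ih p hp)

lemma reach_transfer {V : Type} (G : SimpleGraph V) (S T : Set V) :
    ∀ {u v : {x // x ∈ S}} (w : (G.induce S).Walk u v)
      (_ : ∀ p ∈ w.support, (p : V) ∈ T) (hu : (u : V) ∈ T) (hv : (v : V) ∈ T),
      (G.induce T).Reachable ⟨u, hu⟩ ⟨v, hv⟩ := by
  intro u v w
  induction w with
  | nil => intro _ hu hv; exact Reachable.refl _
  | @cons x y z h w ih =>
      intro hsupp hu hv
      have hy : (y : V) ∈ T := hsupp y (by simp)
      have hadj : (G.induce T).Adj ⟨x, hu⟩ ⟨y, hy⟩ := by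
        simp only [SimpleGraph.comap_adj, Function.Embedding.coe_subtype] at h ⊢
        exact h
      exact (hadj.reachable).trans (ih (fun p hp => hsupp p (by simp [hp])) hy hv)

/-- Lemma 3.1. If `K` is a component of `Γ∖st(a)`, `L` a component of
`Γ∖st(b)`, `a,b` distinct and non-adjacent, and `b ∉ K`, then `K ∩ L = ∅` or `K ⊆ L`. -/
theorem comp_inter_empty_or_subset {V : Type} [Fintype V] (Γ : SimpleGraph V)
    (a b : V) (hab : a ≠ b) (hadj : ¬Γ.Adj a b) (K L : Set V)
    (hK : IsCompOf Γ (Gstar Γ a)ᶜ K) (hL : IsCompOf Γ (Gstar Γ b)ᶜ L)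
    (hbK : b ∉ K) : K ∩ L = ∅ ∨ K ⊆ L := by
  classical
  obtain ⟨c, hKc⟩ := hK
  obtain ⟨d, hLd⟩ := hL
  have hbA : b ∈ (Gstar Γ a)ᶜ := by
    intro h
    rcases h with h | h
    · exact hab h.symm
    · exact hadj h
  -- every vertex of K avoids Gstar b
  have hKb : ∀ v ∈ K, v ∈ (Gstar Γ b)ᶜ := by
    intro v hv hvb
    rcases hvb with rfl | hadjb
    · exact hbK hv
    · -- Γ.Adj b v, so b would be in K
      rw [hKc] at hv
      obtain ⟨p, hp, rfl⟩ := hv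
      have hadj' : (Γ.induce (Gstar Γ a)ᶜ).Adj ⟨b, hbA⟩ p := by
        simp only [SimpleGraph.comap_adj, Function.Embedding.coe_subtype]
        exact hadjb
      apply hbK
      rw [hKc]
      refine ⟨⟨b, hbA⟩, ?_, rfl⟩
      rw [SimpleGraph.ConnectedComponent.mem_supp_iff] at hp ⊢
      rw [← hp]
      exact SimpleGraph.ConnectedComponent.sound hadj'.reachable
  by_cases hne : (K ∩ L).Nonempty
  · right
    obtain ⟨x, hxK, hxL⟩ := hne
    intro y hyK
    -- lifts of x and y in c.supp
    have hxK' := hxK; rw [hKc] at hxK'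
    obtain ⟨px, hpx, hpxv⟩ := hxK'
    have hyK' := hyK; rw [hKc] at hyK'
    obtain ⟨py, hpy, hpyv⟩ := hyK'
    rw [SimpleGraph.ConnectedComponent.mem_supp_iff] at hpx hpy
    have hreach : (Γ.induce (Gstar Γ a)ᶜ).Reachable px py := by
      rw [← SimpleGraph.ConnectedComponent.eq, hpx, hpy]
    obtain ⟨w⟩ := hreach
    have hsupp : ∀ p ∈ w.support, (p : V) ∈ (Gstar Γ b)ᶜ := by
      intro p hp
      apply hKb
      rw [hKc]
      refine ⟨p, ?_, rfl⟩
      rw [SimpleGraph.ConnectedComponent.mem_supp_iff, ← hpx]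
      exact (SimpleGraph.ConnectedComponent.sound
        (reachable_of_mem_support' w p hp)).symm
    have hx' : (px : V) ∈ (Gstar Γ b)ᶜ := hKb _ (hpxv ▸ hxK)
    have hy' : (py : V) ∈ (Gstar Γ b)ᶜ := hKb _ (hpyv ▸ hyK)
    have hreach2 := reach_transfer Γ (Gstar Γ a)ᶜ (Gstar Γ b)ᶜ w hsupp hx' hy'
    -- x ∈ L gives its lift in d.supp
    have hxL' := hxL; rw [hLd] at hxL'
    obtain ⟨qx, hqx, hqxv⟩ := hxL'
    have hqeq : qx = ⟨(px : V), hx'⟩ := Subtype.ext (by rw [hqxv, hpxv])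
    rw [hLd]
    refine ⟨⟨(py : V), hy'⟩, ?_, hpyv⟩
    rw [SimpleGraph.ConnectedComponent.mem_supp_iff] at hqx ⊢
    rw [← hqx, hqeq]
    exact (SimpleGraph.ConnectedComponent.sound hreach2).symm
  · left
    exact Set.not_nonempty_iff_eq_empty.mp hne
end

section
/- Let Γ be a finite simplicial graph with vertex set V such that Z = {v ∈ V : st(v) = V} is non-empty. For every pair of partial conjugations (π_{a,K}, π_{b,L}), exactly one of the following six cases holds: (1) d(a,b) ≤ 1 (i.e., a = b or a and b are adjacent); (2) d(a,b) = 2, a ∈ L, and b ∈ K; (3) d(a,b) = 2, K ∩ L = ∅, and exactly one of a ∈ L or b ∈ K holds; (4) d(a,b) = 2, and either {a} ∪ K ⊊ L or {b} ∪ L ⊊ K; (5) d(a,b) = 2, and ({a} ∪ K) ∩ ({b} ∪ L) = ∅; (6) d(a,b) = 2 and K = L. -/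
open SimpleGraph

namespace PCaux

variable {V : Type} {Γ : SimpleGraph V} {S T K L : Set V}

lemma nonempty (h : IsCompOf Γ S K) : K.Nonempty := by
  obtain ⟨c, rfl⟩ := h
  obtain ⟨v, hv⟩ := c.exists_rep
  exact ⟨v, v, hv, rfl⟩

lemma subset (h : IsCompOf Γ S K) : K ⊆ S := by
  obtain ⟨c, rfl⟩ := h
  rintro _ ⟨v, -, rfl⟩; exact v.2

lemma closed (h : IsCompOf Γ S K) {v w : V} (hv : v ∈ K) (hw : w ∈ S)
    (hadj : Γ.Adj v w) : w ∈ K := by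
  obtain ⟨c, rfl⟩ := h
  obtain ⟨v', hv', rfl⟩ := hv
  refine ⟨⟨w, hw⟩, ?_, rfl⟩
  rw [ConnectedComponent.mem_supp_iff] at hv' ⊢
  rw [← hv']
  exact ConnectedComponent.connectedComponentMk_eq_of_adj
    (by simpa using hadj.symm : (Γ.induce S).Adj ⟨w, hw⟩ v')

lemma supp_mem {c : (Γ.induce S).ConnectedComponent} {x y : ↥S}
    (hx : x ∈ c.supp) (w : (Γ.induce S).Walk x y) :
    ∀ v ∈ w.support, v ∈ c.supp := by
  classical
  intro v hv
  rw [ConnectedComponent.mem_supp_iff] at hx ⊢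
  rw [← hx]
  exact ConnectedComponent.eq.mpr ⟨(w.takeUntil v hv).reverse⟩

lemma walk_transfer {x y : ↥S} (w : (Γ.induce S).Walk x y)
    (hsupp : ∀ v ∈ w.support, (v : V) ∈ T) :
    ∀ (hx : (x : V) ∈ T) (hy : (y : V) ∈ T),
      (Γ.induce T).Reachable ⟨(x : V), hx⟩ ⟨(y : V), hy⟩ := by
  induction w with
  | nil => intro hx hy; rfl
  | @cons u v z h p ih =>
      intro hx hy
      have hv : (v : V) ∈ T := hsupp v (by simp)
      have h1 : (Γ.induce T).Adj ⟨(u : V), hx⟩ ⟨(v : V), hv⟩ := by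
        simpa using (by simpa using h : Γ.Adj (u : V) (v : V))
      exact (h1.reachable).trans (ih (fun q hq => hsupp q (by simp [hq])) hv hy)

/-- If `K` is a component of `S`, `K ⊆ T`, and `K` meets the component `L` of `T`,
then `K ⊆ L`. -/
lemma mono (hK : IsCompOf Γ S K) (hL : IsCompOf Γ T L) (hKT : K ⊆ T)
    (hx : (K ∩ L).Nonempty) : K ⊆ L := by
  obtain ⟨cK, rfl⟩ := hK
  obtain ⟨cL, rfl⟩ := hL
  obtain ⟨m, hmK, hmL⟩ := hx
  rintro _ ⟨u, hu, rfl⟩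
  obtain ⟨m', hm', hm'v⟩ := hmK
  rw [ConnectedComponent.mem_supp_iff] at hu hm'
  have hreach : (Γ.induce S).Reachable u m' :=
    ConnectedComponent.eq.mp (hu.trans hm'.symm)
  obtain ⟨w⟩ := hreach
  have hsupp : ∀ v ∈ w.support, (v : V) ∈ T := by
    intro v hv
    exact hKT ⟨v, supp_mem (by rw [ConnectedComponent.mem_supp_iff, hu]) w v hv, rfl⟩
  have hut : (u : V) ∈ T := hKT ⟨u, by rw [ConnectedComponent.mem_supp_iff, hu], rfl⟩
  have hmt : (m' : V) ∈ T := hKT ⟨m', by rw [ConnectedComponent.mem_supp_iff, hm'], rfl⟩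
  have hreachT := walk_transfer w hsupp hut hmt
  -- m ∈ cL.supp as subtype
  obtain ⟨m'', hm'', hm''v⟩ := hmL
  have : (⟨(m' : V), hmt⟩ : ↥T) = m'' := Subtype.ext (hm'v.trans hm''v.symm)
  refine ⟨⟨(u : V), hut⟩, ?_, rfl⟩
  rw [ConnectedComponent.mem_supp_iff] at hm'' ⊢
  rw [← hm'', ← this]
  exact ConnectedComponent.eq.mpr hreachT

/-- If `x y ∈ K`, `x ≠ y`, then `x` has a neighbour in `K`. -/
lemma exists_neighbor (hK : IsCompOf Γ S K) {x y : V} (hx : x ∈ K) (hy : y ∈ K)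
    (hxy : x ≠ y) : ∃ w ∈ K, Γ.Adj x w := by
  obtain ⟨c, rfl⟩ := hK
  obtain ⟨x', hx', rfl⟩ := hx
  obtain ⟨y', hy', hy'v⟩ := hy
  rw [ConnectedComponent.mem_supp_iff] at hx' hy'
  obtain ⟨w⟩ := ConnectedComponent.eq.mp (hx'.trans hy'.symm)
  cases w with
  | nil => exact absurd hy'v hxy
  | cons h p =>
      rename_i v
      refine ⟨(v : V), ⟨v, ?_, rfl⟩, by simpa using h⟩
      exact supp_mem (by rw [ConnectedComponent.mem_supp_iff, hx']) (SimpleGraph.Walk.cons h p) v (by simp)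

end PCaux
lemma six_unique (P0 P1 P2 P3 P4 P5 : Prop)
    (h01 : P0 → P1 → False) (h02 : P0 → P2 → False) (h03 : P0 → P3 → False)
    (h04 : P0 → P4 → False) (h05 : P0 → P5 → False)
    (h12 : P1 → P2 → False) (h13 : P1 → P3 → False) (h14 : P1 → P4 → False)
    (h15 : P1 → P5 → False)
    (h23 : P2 → P3 → False) (h24 : P2 → P4 → False) (h25 : P2 → P5 → False)
    (h34 : P3 → P4 → False) (h35 : P3 → P5 → False) (h45 : P4 → P5 → False)
    (hex : P0 ∨ P1 ∨ P2 ∨ P3 ∨ P4 ∨ P5) :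
    ∃! i : Fin 6, ![P0, P1, P2, P3, P4, P5] i := by
  have uniq : ∀ j : Fin 6, ![P0, P1, P2, P3, P4, P5] j →
      ∀ i : Fin 6, ![P0, P1, P2, P3, P4, P5] i → j = i := by
    intro j hj i hi
    fin_cases j <;> fin_cases i <;> simp_all <;> tauto
  rcases hex with h | h | h | h | h | h
  · exact ⟨0, by simpa using h, fun j hj => uniq j hj 0 (by simpa using h)⟩
  · exact ⟨1, by simpa using h, fun j hj => uniq j hj 1 (by simpa using h)⟩
  · exact ⟨2, by simpa using h, fun j hj => uniq j hj 2 (by simpa using h)⟩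
  · exact ⟨3, by simpa using h, fun j hj => uniq j hj 3 (by simpa using h)⟩
  · exact ⟨4, by simpa using h, fun j hj => uniq j hj 4 (by simpa using h)⟩
  · exact ⟨5, by simpa using h, fun j hj => uniq j hj 5 (by simpa using h)⟩


/-- Lemma 3.2, trichotomy part. For any pair of partial conjugations
`(π_{a,K}, π_{b,L})`, exactly one of the six listed cases holds. -/
theorem pc_pair_six_cases {V : Type} [Fintype V] (Γ : SimpleGraph V)
    (hZ : (Zset Γ).Nonempty) (a b : V) (K L : Set V)
    (hK : IsCompOf Γ (Gstar Γ a)ᶜ K) (hL : IsCompOf Γ (Gstar Γ b)ᶜ L) :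
    ∃! i : Fin 6,
      ![ a = b ∨ Γ.Adj a b,
         (a ≠ b ∧ ¬Γ.Adj a b) ∧ a ∈ L ∧ b ∈ K,
         (a ≠ b ∧ ¬Γ.Adj a b) ∧ K ∩ L = ∅ ∧ Xor' (a ∈ L) (b ∈ K),
         (a ≠ b ∧ ¬Γ.Adj a b) ∧ (insert a K ⊂ L ∨ insert b L ⊂ K),
         (a ≠ b ∧ ¬Γ.Adj a b) ∧ (insert a K) ∩ (insert b L) = ∅,
         (a ≠ b ∧ ¬Γ.Adj a b) ∧ K = L ] i := by
  
  classical
  have hKne := PCaux.nonempty hK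
  have hLne := PCaux.nonempty hL
  have hKsub := PCaux.subset hK
  have hLsub := PCaux.subset hL
  have haK : a ∉ K := fun h => hKsub h (Set.mem_insert a _)
  have hbL : b ∉ L := fun h => hLsub h (Set.mem_insert b _)
  apply six_unique
  · rintro h0 ⟨⟨hne, hnadj⟩, -⟩; exact h0.elim hne hnadj
  · rintro h0 ⟨⟨hne, hnadj⟩, -⟩; exact h0.elim hne hnadj
  · rintro h0 ⟨⟨hne, hnadj⟩, -⟩; exact h0.elim hne hnadj
  · rintro h0 ⟨⟨hne, hnadj⟩, -⟩; exact h0.elim hne hnadj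
  · rintro h0 ⟨⟨hne, hnadj⟩, -⟩; exact h0.elim hne hnadj
  · -- 1 vs 2
    rintro ⟨-, haL, hbK⟩ ⟨-, -, hx⟩
    rcases hx with ⟨-, h⟩ | ⟨-, h⟩
    · exact h hbK
    · exact h haL
  · -- 1 vs 3
    rintro ⟨-, haL, hbK⟩ ⟨-, h | h⟩
    · exact hbL (h.subset (Set.mem_insert_of_mem _ hbK))
    · exact haK (h.subset (Set.mem_insert_of_mem _ haL))
  · -- 1 vs 4
    rintro ⟨-, haL, hbK⟩ ⟨-, h⟩
    have : a ∈ (insert a K) ∩ (insert b L) :=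
      ⟨Set.mem_insert _ _, Set.mem_insert_of_mem _ haL⟩
    rw [h] at this; exact this
  · -- 1 vs 5
    rintro ⟨-, -, hbK⟩ ⟨-, h⟩; exact hbL (h ▸ hbK)
  · -- 2 vs 3
    rintro ⟨-, hKL, -⟩ ⟨-, h | h⟩
    · obtain ⟨x, hx⟩ := hKne
      have : x ∈ K ∩ L := ⟨hx, h.subset (Set.mem_insert_of_mem _ hx)⟩
      rw [hKL] at this; exact this
    · obtain ⟨x, hx⟩ := hLne
      have : x ∈ K ∩ L := ⟨h.subset (Set.mem_insert_of_mem _ hx), hx⟩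
      rw [hKL] at this; exact this
  · -- 2 vs 4
    rintro ⟨-, -, hx⟩ ⟨-, h⟩
    rcases hx with ⟨haL, -⟩ | ⟨hbK, -⟩
    · have : a ∈ (insert a K) ∩ (insert b L) :=
        ⟨Set.mem_insert _ _, Set.mem_insert_of_mem _ haL⟩
      rw [h] at this; exact this
    · have : b ∈ (insert a K) ∩ (insert b L) :=
        ⟨Set.mem_insert_of_mem _ hbK, Set.mem_insert _ _⟩
      rw [h] at this; exact this
  · -- 2 vs 5
    rintro ⟨-, hKL, -⟩ ⟨-, h⟩
    obtain ⟨x, hx⟩ := hKne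
    have : x ∈ K ∩ L := ⟨hx, h ▸ hx⟩
    rw [hKL] at this; exact this
  · -- 3 vs 4
    rintro ⟨-, h3⟩ ⟨-, h4⟩
    rcases h3 with h | h
    · have : a ∈ (insert a K) ∩ (insert b L) :=
        ⟨Set.mem_insert _ _, Set.mem_insert_of_mem _ (h.subset (Set.mem_insert _ _))⟩
      rw [h4] at this; exact this
    · have : b ∈ (insert a K) ∩ (insert b L) :=
        ⟨Set.mem_insert_of_mem _ (h.subset (Set.mem_insert _ _)), Set.mem_insert _ _⟩
      rw [h4] at this; exact this
  · -- 3 vs 5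
    rintro ⟨-, h3⟩ ⟨-, hKL⟩
    rcases h3 with h | h
    · exact haK (by rw [hKL]; exact h.subset (Set.mem_insert _ _))
    · exact hbL (by rw [← hKL]; exact h.subset (Set.mem_insert _ _))
  · -- 4 vs 5
    rintro ⟨-, h4⟩ ⟨-, hKL⟩
    obtain ⟨x, hx⟩ := hKne
    have : x ∈ (insert a K) ∩ (insert b L) :=
      ⟨Set.mem_insert_of_mem _ hx, Set.mem_insert_of_mem _ (hKL ▸ hx)⟩
    rw [h4] at this; exact this
  · -- existence
    by_cases hd0 : a = b ∨ Γ.Adj a b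
    · exact Or.inl hd0
    · push_neg at hd0
      obtain ⟨hne, hnadj⟩ := hd0
      have hd : a ≠ b ∧ ¬Γ.Adj a b := ⟨hne, hnadj⟩
      have hbGa : b ∈ (Gstar Γ a)ᶜ := by
        simp only [Gstar, Set.mem_compl_iff, Set.mem_insert_iff,
          SimpleGraph.mem_neighborSet]
        push_neg
        exact ⟨fun h => hne h.symm, hnadj⟩
      have haGb : a ∈ (Gstar Γ b)ᶜ := by
        simp only [Gstar, Set.mem_compl_iff, Set.mem_insert_iff,
          SimpleGraph.mem_neighborSet]
        push_neg
        exact ⟨hne, fun h => hnadj h.symm⟩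
      have hKnotb : b ∉ K → K ⊆ (Gstar Γ b)ᶜ := by
        intro hbK v hv hvGb
        rcases Set.mem_insert_iff.mp hvGb with rfl | hadj
        · exact hbK hv
        · exact hbK (PCaux.closed hK hv hbGa
            ((SimpleGraph.mem_neighborSet Γ b v).mp hadj).symm)
      have hLnota : a ∉ L → L ⊆ (Gstar Γ a)ᶜ := by
        intro haL v hv hvGa
        rcases Set.mem_insert_iff.mp hvGa with rfl | hadj
        · exact haL hv
        · exact haL (PCaux.closed hL hv haGb
            ((SimpleGraph.mem_neighborSet Γ a v).mp hadj).symm)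
      by_cases hbK : b ∈ K <;> by_cases haL : a ∈ L
      · exact Or.inr (Or.inl ⟨hd, haL, hbK⟩)
      · -- b ∈ K, a ∉ L
        by_cases hmeet : (L ∩ K).Nonempty
        · have hLK : L ⊆ K := PCaux.mono hL hK (hLnota haL) hmeet
          refine Or.inr (Or.inr (Or.inr (Or.inl ⟨hd, Or.inr
            ⟨Set.insert_subset hbK hLK, ?_⟩⟩)))
          intro hKsub'
          obtain ⟨v, hvL⟩ := hLne
          have hvK : v ∈ K := hLK hvL
          have hvb : b ≠ v := fun h => hbL (h ▸ hvL)
          obtain ⟨w, hwK, hbw⟩ := PCaux.exists_neighbor hK hbK hvK hvb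
          rcases Set.mem_insert_iff.mp (hKsub' hwK) with rfl | hwL
          · exact Γ.irrefl hbw
          · exact (hLsub hwL) (Set.mem_insert_of_mem _ hbw)
        · have hKL0 : K ∩ L = ∅ := by
            rw [Set.inter_comm]; exact Set.not_nonempty_iff_eq_empty.mp hmeet
          exact Or.inr (Or.inr (Or.inl ⟨hd, hKL0, Or.inr ⟨hbK, haL⟩⟩))
      · -- a ∈ L, b ∉ K
        by_cases hmeet : (K ∩ L).Nonempty
        · have hKL : K ⊆ L := PCaux.mono hK hL (hKnotb hbK) hmeet
          refine Or.inr (Or.inr (Or.inr (Or.inl ⟨hd, Or.inl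
            ⟨Set.insert_subset haL hKL, ?_⟩⟩)))
          intro hLsub'
          obtain ⟨v, hvK⟩ := hKne
          have hvL : v ∈ L := hKL hvK
          have hva : a ≠ v := fun h => haK (h ▸ hvK)
          obtain ⟨w, hwL, haw⟩ := PCaux.exists_neighbor hL haL hvL hva
          rcases Set.mem_insert_iff.mp (hLsub' hwL) with rfl | hwK
          · exact Γ.irrefl haw
          · exact (hKsub hwK) (Set.mem_insert_of_mem _ haw)
        · have hKL0 : K ∩ L = ∅ := Set.not_nonempty_iff_eq_empty.mp hmeet
          exact Or.inr (Or.inr (Or.inl ⟨hd, hKL0, Or.inl ⟨haL, hbK⟩⟩))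
      · -- a ∉ L, b ∉ K
        by_cases hmeet : (K ∩ L).Nonempty
        · have hKL : K ⊆ L := PCaux.mono hK hL (hKnotb hbK) hmeet
          have hLK : L ⊆ K := PCaux.mono hL hK (hLnota haL)
            (by rwa [Set.inter_comm] at hmeet)
          exact Or.inr (Or.inr (Or.inr (Or.inr (Or.inr
            ⟨hd, Set.Subset.antisymm hKL hLK⟩))))
        · have hKL0 : K ∩ L = ∅ := Set.not_nonempty_iff_eq_empty.mp hmeet
          refine Or.inr (Or.inr (Or.inr (Or.inr (Or.inl ⟨hd, ?_⟩))))
          apply Set.eq_empty_iff_forall_notMem.mpr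
          rintro x ⟨hx1, hx2⟩
          rcases Set.mem_insert_iff.mp hx1 with rfl | hxK <;>
            rcases Set.mem_insert_iff.mp hx2 with h | h
          · exact hne h
          · exact haL h
          · exact hbK (h ▸ hxK)
          · exact Set.eq_empty_iff_forall_notMem.mp hKL0 x ⟨hxK, h⟩
end

section
/- Let Γ be a finite simplicial graph with vertex set V such that Z = {v ∈ V : st(v) = V} is non-empty, and let A = A(Γ). Two partial conjugations π_{a,K} and π_{b,L} commute in Aut(A) if and only if one of the following holds: (1) a = b or a and b are adjacent; (4) a ≠ b, a and b are non-adjacent, and either {a} ∪ K ⊊ L or {b} ∪ L ⊊ K; (5) a ≠ b, a and b are non-adjacent, and ({a} ∪ K) ∩ ({b} ∪ L) = ∅. -/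
open SimpleGraph

section AuxLemmas

variable {V : Type} (Γ : SimpleGraph V)

lemma raagGen_comm {u w : V} (h : Γ.Adj u w) :
    Commute (raagGen Γ u) (raagGen Γ w) := by
  have hmem : (FreeGroup.of u * FreeGroup.of w * (FreeGroup.of u)⁻¹ * (FreeGroup.of w)⁻¹ :
      FreeGroup V) ∈ raagRels Γ := ⟨u, w, h, rfl⟩
  have h1 : (PresentedGroup.mk (raagRels Γ))
      (FreeGroup.of u * FreeGroup.of w * (FreeGroup.of u)⁻¹ * (FreeGroup.of w)⁻¹) = 1 := by
    apply (QuotientGroup.eq_one_iff _).2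
    exact Subgroup.subset_normalClosure hmem
  simp only [map_mul, map_inv] at h1
  have h2 : raagGen Γ u * raagGen Γ w * (raagGen Γ u)⁻¹ * (raagGen Γ w)⁻¹ = 1 := h1
  unfold Commute SemiconjBy
  rw [show raagGen Γ u * raagGen Γ w = ((raagGen Γ u * raagGen Γ w * (raagGen Γ u)⁻¹ *
    (raagGen Γ w)⁻¹)) * (raagGen Γ w * raagGen Γ u) by group, h2, one_mul]

lemma exists_sep_hom {G : Type} [Group G] (f : V → G)
    (hf : ∀ u w, Γ.Adj u w → Commute (f u) (f w)) :
    ∃ F : RAAG Γ →* G, ∀ v, F (raagGen Γ v) = f v := by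
  have h : ∀ r ∈ raagRels Γ, FreeGroup.lift f r = 1 := by
    rintro r ⟨u, w, huw, rfl⟩
    simp only [map_mul, map_inv, FreeGroup.lift_apply_of]
    rw [(hf u w huw).eq]
    group
  exact ⟨PresentedGroup.toGroup h, fun v => PresentedGroup.toGroup.of h⟩

lemma commute_of_gen {φ ψ : MulAut (RAAG Γ)}
    (h : ∀ v, φ (ψ (raagGen Γ v)) = ψ (φ (raagGen Γ v))) : Commute φ ψ := by
  have hh : (φ * ψ : MulAut (RAAG Γ)).toMonoidHom = (ψ * φ : MulAut (RAAG Γ)).toMonoidHom := by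
    apply PresentedGroup.ext
    intro v
    simpa [MulAut.mul_apply, raagGen] using h v
  exact MulEquiv.toMonoidHom_injective hh

lemma gen_of_commute {φ ψ : MulAut (RAAG Γ)} (h : Commute φ ψ) (v : V) :
    φ (ψ (raagGen Γ v)) = ψ (φ (raagGen Γ v)) := by
  have := DFunLike.congr_fun h.eq (raagGen Γ v)
  simpa [MulAut.mul_apply] using this

lemma IsCompOf.subset' {S K : Set V} (h : IsCompOf Γ S K) : K ⊆ S := by
  obtain ⟨c, rfl⟩ := h
  rintro v ⟨u, _, rfl⟩
  exact u.2

lemma IsCompOf.nonempty' {S K : Set V} (h : IsCompOf Γ S K) : K.Nonempty := by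
  obtain ⟨c, rfl⟩ := h
  obtain ⟨u, hu⟩ := c.exists_rep
  exact ⟨u, u, by rw [SimpleGraph.ConnectedComponent.mem_supp_iff]; exact hu, rfl⟩

lemma mem_comp_facts {a : V} {K : Set V} (hK : IsCompOf Γ (Gstar Γ a)ᶜ K) {v : V}
    (hv : v ∈ K) : v ≠ a ∧ ¬Γ.Adj a v := by
  have := hK.subset' Γ hv
  simpa [Gstar, not_or] using this

lemma not_self_mem_comp {a : V} {K : Set V} (hK : IsCompOf Γ (Gstar Γ a)ᶜ K) : a ∉ K :=
  fun h => (mem_comp_facts Γ hK h).1 rfl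

/-- Strictness: if `a ∈ L` and `K ⊆ L` then the inclusion `{a} ∪ K ⊆ L` is strict. -/
lemma insert_ssubset_of_mem_of_subset {a b : V} {K L : Set V}
    (hK : IsCompOf Γ (Gstar Γ a)ᶜ K) (hL : IsCompOf Γ (Gstar Γ b)ᶜ L)
    (haL : a ∈ L) (hKL : K ⊆ L) : insert a K ⊂ L := by
  constructor
  · exact Set.insert_subset haL hKL
  · intro hsub
    obtain ⟨k, hk⟩ := hK.nonempty' Γ
    obtain ⟨c, hc⟩ := hL
    have hL' := hc
    subst hc
    obtain ⟨ua, hua, haeq⟩ := haL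
    obtain ⟨uk, huk, hkeq⟩ := hKL hk
    rw [SimpleGraph.ConnectedComponent.mem_supp_iff] at hua huk
    have hreach : (Γ.induce (Gstar Γ b)ᶜ).Reachable ua uk :=
      SimpleGraph.ConnectedComponent.eq.1 (hua.trans huk.symm)
    obtain ⟨p⟩ := hreach
    cases p with
    | nil =>
        have : a = k := haeq.symm.trans hkeq
        exact (mem_comp_facts Γ hK hk).1 (this.symm)
    | cons hadj p' =>
        rename_i u'
        have hA : Γ.Adj a u'.val := by
          have h' : Γ.Adj (ua : V) (u' : V) := hadj
          rwa [haeq] at h'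
        have hu'c : (Γ.induce (Gstar Γ b)ᶜ).connectedComponentMk u' = c := by
          rw [← hua]
          exact (SimpleGraph.ConnectedComponent.eq.2 hadj.symm.reachable)
        have hu'L : u'.val ∈ Subtype.val '' c.supp :=
          ⟨u', (SimpleGraph.ConnectedComponent.mem_supp_iff _ _).2 hu'c, rfl⟩
        rcases hsub hu'L with h' | h'
        · exact Γ.loopless.irrefl a (h' ▸ hA)
        · exact (mem_comp_facts Γ hK h').2 hA

/-- Key forward lemma: if the partial conjugations commute, `a` and `b` are distinct
non-adjacent and `a ∈ L`, then `K ⊆ L`. -/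
lemma key_sub {a b : V} {K L : Set V} {φ ψ : MulAut (RAAG Γ)}
    (hφ : IsPartialConj Γ a K φ) (hψ : IsPartialConj Γ b L ψ)
    (hadj : ¬Γ.Adj a b) (haL : a ∈ L)
    (hc : ∀ v, φ (ψ (raagGen Γ v)) = ψ (φ (raagGen Γ v))) : K ⊆ L := by
  classical
  intro v hvK
  by_contra hvL
  obtain ⟨hKc, hφK, hφn⟩ := hφ
  obtain ⟨hLc, hψK, hψn⟩ := hψ
  have hva : v ≠ a ∧ ¬Γ.Adj a v := mem_comp_facts Γ hKc hvK
  have hab : a ≠ b ∧ ¬Γ.Adj b a := mem_comp_facts Γ hLc haL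
  have heq := hc v
  rw [hψn v hvL, hφK v hvK] at heq
  simp only [map_mul, map_inv, hψK a haL, hψn v hvL] at heq
  -- separating homomorphism to S₃
  set s : Equiv.Perm (Fin 3) := Equiv.swap 0 1 with hs
  set t : Equiv.Perm (Fin 3) := Equiv.swap 1 2 with ht
  set f : V → Equiv.Perm (Fin 3) :=
    fun u => if u = a then s else if u = b then t else if u = v then t else 1 with hfdef
  have hval : ∀ z, f z = 1 ∨ f z = s ∨ f z = t := by
    intro z; simp only [hfdef]; split_ifs <;> simp
  have hzs : ∀ z, f z = s → z = a := by
    intro z hz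
    simp only [hfdef] at hz
    split_ifs at hz with h1 h2 h3
    · exact h1
    all_goals exact absurd hz (by decide)
  have hzt : ∀ z, f z = t → z = b ∨ z = v := by
    intro z hz
    simp only [hfdef] at hz
    split_ifs at hz with h1 h2 h3
    · exact absurd hz (by decide)
    · exact Or.inl h2
    · exact Or.inr h3
    · exact absurd hz (by decide)
  have hf : ∀ u w, Γ.Adj u w → Commute (f u) (f w) := by
    intro u w h
    rcases hval u with h1 | h1 | h1 <;> rcases hval w with h2 | h2 | h2 <;>
      rw [h1, h2] <;>
      try first
        | exact Commute.one_left _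
        | exact Commute.one_right _
        | exact Commute.refl _
    · -- f u = s, f w = t
      exfalso
      rcases hzt w h2 with rfl | rfl
      · exact hadj ((hzs u h1) ▸ h)
      · exact hva.2 ((hzs u h1) ▸ h)
    · -- f u = t, f w = s
      exfalso
      rcases hzt u h1 with rfl | rfl
      · exact hab.2 ((hzs w h2) ▸ h)
      · exact hva.2 ((hzs w h2) ▸ h.symm)
  obtain ⟨F, hF⟩ := exists_sep_hom Γ f hf
  have himg := congrArg F heq
  simp only [map_mul, map_inv, hF] at himg
  have hfa : f a = s := by simp [hfdef]
  have hfb : f b = t := by simp [hfdef, Ne.symm hab.1]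
  have hfv : f v = t := by
    simp only [hfdef]
    by_cases h : v = b
    · rw [if_neg hva.1, if_pos h]
    · rw [if_neg hva.1, if_neg h]
      simp
  rw [hfa, hfb, hfv] at himg
  rw [hs, ht] at himg
  exact absurd himg (by decide)

/-- Key forward lemma: if the partial conjugations commute, `a,b` distinct non-adjacent,
`a ∉ L` and `b ∉ K`, then `K` and `L` are disjoint. -/
lemma key_disj {a b : V} {K L : Set V} {φ ψ : MulAut (RAAG Γ)}
    (hφ : IsPartialConj Γ a K φ) (hψ : IsPartialConj Γ b L ψ)
    (hab : a ≠ b) (hadj : ¬Γ.Adj a b) (haL : a ∉ L) (hbK : b ∉ K)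
    (hc : ∀ v, φ (ψ (raagGen Γ v)) = ψ (φ (raagGen Γ v))) :
    ∀ v, v ∈ K → v ∉ L := by
  classical
  intro v hvK hvL
  obtain ⟨hKc, hφK, hφn⟩ := hφ
  obtain ⟨hLc, hψK, hψn⟩ := hψ
  have hva : v ≠ a ∧ ¬Γ.Adj a v := mem_comp_facts Γ hKc hvK
  have hvb : v ≠ b ∧ ¬Γ.Adj b v := mem_comp_facts Γ hLc hvL
  have heq := hc v
  rw [hψK v hvL, hφK v hvK] at heq
  simp only [map_mul, map_inv, hφn b hbK, hφK v hvK, hψn a haL, hψK v hvL] at heq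
  set s : Equiv.Perm (Fin 3) := Equiv.swap 0 1 with hs
  set t : Equiv.Perm (Fin 3) := Equiv.swap 1 2 with ht
  set f : V → Equiv.Perm (Fin 3) :=
    fun u => if u = a then s else if u = b then t else if u = v then s else 1 with hfdef
  have hval : ∀ z, f z = 1 ∨ f z = s ∨ f z = t := by
    intro z; simp only [hfdef]; split_ifs <;> simp
  have hzs : ∀ z, f z = s → z = a ∨ z = v := by
    intro z hz
    simp only [hfdef] at hz
    split_ifs at hz with h1 h2 h3
    · exact Or.inl h1
    · exact absurd hz (by decide)
    · exact Or.inr h3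
    · exact absurd hz (by decide)
  have hzt : ∀ z, f z = t → z = b := by
    intro z hz
    simp only [hfdef] at hz
    split_ifs at hz with h1 h2 h3
    · exact absurd hz (by decide)
    · exact h2
    all_goals exact absurd hz (by decide)
  have hf : ∀ u w, Γ.Adj u w → Commute (f u) (f w) := by
    intro u w h
    rcases hval u with h1 | h1 | h1 <;> rcases hval w with h2 | h2 | h2 <;>
      rw [h1, h2] <;>
      try first
        | exact Commute.one_left _
        | exact Commute.one_right _
        | exact Commute.refl _
    · -- f u = s, f w = t
      exfalso
      rcases hzs u h1 with rfl | rfl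
      · exact hadj ((hzt w h2) ▸ h)
      · exact hvb.2 ((hzt w h2) ▸ h.symm)
    · -- f u = t, f w = s
      exfalso
      rcases hzs w h2 with rfl | rfl
      · exact hadj ((hzt u h1) ▸ h.symm)
      · exact hvb.2 ((hzt u h1) ▸ h)
  obtain ⟨F, hF⟩ := exists_sep_hom Γ f hf
  have himg := congrArg F heq
  simp only [map_mul, map_inv, hF] at himg
  have hfa : f a = s := by simp [hfdef]
  have hfb : f b = t := by simp [hfdef, Ne.symm hab]
  have hfv : f v = s := by
    simp only [hfdef]
    rw [if_neg hva.1, if_neg hvb.1]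
    simp
  rw [hfa, hfb, hfv] at himg
  rw [hs, ht] at himg
  exact absurd himg (by decide)

/-- Conjugation identity used in the adjacent case. -/
lemma conj_conj_comm {G : Type*} [Group G] {x y : G} (h : Commute x y) (g : G) :
    y⁻¹ * (x⁻¹ * g * x) * y = x⁻¹ * (y⁻¹ * g * y) * x := by
  rw [show y⁻¹ * (x⁻¹ * g * x) * y = (x * y)⁻¹ * g * (x * y) by group,
      show x⁻¹ * (y⁻¹ * g * y) * x = (y * x)⁻¹ * g * (y * x) by group, h.eq]

/-- Backward lemma for case (4): if `{a} ∪ K ⊂ L` then the generator images commute. -/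
lemma bwd4 {a b : V} {K L : Set V} {φ ψ : MulAut (RAAG Γ)}
    (hφ : IsPartialConj Γ a K φ) (hψ : IsPartialConj Γ b L ψ)
    (hsub : insert a K ⊂ L) (v : V) :
    φ (ψ (raagGen Γ v)) = ψ (φ (raagGen Γ v)) := by
  obtain ⟨hKc, hφK, hφn⟩ := hφ
  obtain ⟨hLc, hψK, hψn⟩ := hψ
  have haL : a ∈ L := hsub.1 (Set.mem_insert _ _)
  have hKL : K ⊆ L := fun z hz => hsub.1 (Set.mem_insert_of_mem _ hz)
  have hbL : b ∉ L := not_self_mem_comp Γ hLc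
  have hbK : b ∉ K := fun h => hbL (hKL h)
  by_cases hvK : v ∈ K
  · have hvL : v ∈ L := hKL hvK
    rw [hψK v hvL, hφK v hvK]
    simp only [map_mul, map_inv, hφn b hbK, hφK v hvK, hψK a haL, hψn v, hψK v hvL]
    group
  · by_cases hvL : v ∈ L
    · rw [hψK v hvL, hφn v hvK]
      simp only [map_mul, map_inv, hφn b hbK, hφn v hvK, hψK v hvL]
    · simp only [hψn v hvL, hφn v hvK]

end AuxLemmas

/-- Lemma 3.2, commutation part. Two partial conjugations `π_{a,K}` and
`π_{b,L}` commute if and only if case (1), (4) or (5) holds. -/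
theorem pc_commute_iff {V : Type} [Fintype V] (Γ : SimpleGraph V)
    (hZ : (Zset Γ).Nonempty) (a b : V) (K L : Set V) (φ ψ : MulAut (RAAG Γ))
    (hφ : IsPartialConj Γ a K φ) (hψ : IsPartialConj Γ b L ψ) :
    Commute φ ψ ↔
      ((a = b ∨ Γ.Adj a b) ∨
       (a ≠ b ∧ ¬Γ.Adj a b ∧ (insert a K ⊂ L ∨ insert b L ⊂ K)) ∨
       (a ≠ b ∧ ¬Γ.Adj a b ∧ (insert a K) ∩ (insert b L) = ∅)) := by
  constructor
  · intro hcom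
    have hc := gen_of_commute Γ hcom
    by_cases h1 : a = b ∨ Γ.Adj a b
    · exact Or.inl h1
    · push_neg at h1
      obtain ⟨hab, hadj⟩ := h1
      have hadj' : ¬Γ.Adj b a := fun h => hadj h.symm
      have hc' : ∀ v, ψ (φ (raagGen Γ v)) = φ (ψ (raagGen Γ v)) := fun v => (hc v).symm
      by_cases haL : a ∈ L
      · have hKL : K ⊆ L := key_sub Γ hφ hψ hadj haL hc
        exact Or.inr (Or.inl ⟨hab, hadj,
          Or.inl (insert_ssubset_of_mem_of_subset Γ hφ.1 hψ.1 haL hKL)⟩)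
      · by_cases hbK : b ∈ K
        · have hLK : L ⊆ K := key_sub Γ hψ hφ hadj' hbK hc'
          exact Or.inr (Or.inl ⟨hab, hadj,
            Or.inr (insert_ssubset_of_mem_of_subset Γ hψ.1 hφ.1 hbK hLK)⟩)
        · have hdisj := key_disj Γ hφ hψ hab hadj haL hbK hc
          refine Or.inr (Or.inr ⟨hab, hadj, ?_⟩)
          ext z
          simp only [Set.mem_inter_iff, Set.mem_insert_iff, Set.mem_empty_iff_false,
            iff_false, not_and]
          rintro (rfl | hzK) h'
          · rcases h' with h' | h'
            · exact hab h'
            · exact haL h'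
          · rcases h' with rfl | h'
            · exact hbK hzK
            · exact hdisj z hzK h'
  · rintro (h | ⟨hab, hadj, h4⟩ | ⟨hab, hadj, h5⟩)
    · rcases h with rfl | hadj
      · -- a = b
        apply commute_of_gen
        intro v
        obtain ⟨hKc, hφK, hφn⟩ := hφ
        obtain ⟨hLc, hψK, hψn⟩ := hψ
        have haK : a ∉ K := not_self_mem_comp Γ hKc
        have haL : a ∉ L := not_self_mem_comp Γ hLc
        by_cases hvK : v ∈ K <;> by_cases hvL : v ∈ L
        · rw [hψK v hvL, hφK v hvK]
          simp only [map_mul, map_inv, hφn a haK, hφK v hvK, hψn a haL, hψK v hvL]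
        · rw [hψn v hvL, hφK v hvK]
          simp only [map_mul, map_inv, hψn a haL, hψn v hvL]
        · rw [hψK v hvL, hφn v hvK]
          simp only [map_mul, map_inv, hφn a haK, hφn v hvK, hψK v hvL]
        · simp only [hψn v hvL, hφn v hvK]
      · -- a adjacent to b
        apply commute_of_gen
        intro v
        obtain ⟨hKc, hφK, hφn⟩ := hφ
        obtain ⟨hLc, hψK, hψn⟩ := hψ
        have hbK : b ∉ K := fun h => (mem_comp_facts Γ hKc h).2 hadj
        have haL : a ∉ L := fun h => (mem_comp_facts Γ hLc h).2 hadj.symm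
        have hxy : Commute (raagGen Γ a) (raagGen Γ b) := raagGen_comm Γ hadj
        by_cases hvK : v ∈ K <;> by_cases hvL : v ∈ L
        · rw [hψK v hvL, hφK v hvK]
          simp only [map_mul, map_inv, hφn b hbK, hφK v hvK, hψn a haL, hψK v hvL]
          exact conj_conj_comm hxy _
        · rw [hψn v hvL, hφK v hvK]
          simp only [map_mul, map_inv, hψn a haL, hψn v hvL]
        · rw [hψK v hvL, hφn v hvK]
          simp only [map_mul, map_inv, hφn b hbK, hφn v hvK, hψK v hvL]
        · simp only [hψn v hvL, hφn v hvK]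
    · rcases h4 with h4 | h4
      · exact commute_of_gen Γ (fun v => bwd4 Γ hφ hψ h4 v)
      · exact (commute_of_gen Γ (fun v => bwd4 Γ hψ hφ h4 v)).symm
    · -- disjoint case
      have hdis : ∀ z, z ∈ insert a K → z ∉ insert b L := by
        intro z h1 h2
        rw [Set.eq_empty_iff_forall_notMem] at h5
        exact h5 z ⟨h1, h2⟩
      obtain ⟨hKc, hφK, hφn⟩ := hφ
      obtain ⟨hLc, hψK, hψn⟩ := hψ
      have haL : a ∉ L := fun h => hdis a (Set.mem_insert _ _) (Set.mem_insert_of_mem _ h)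
      have hbK : b ∉ K := fun h => hdis b (Set.mem_insert_of_mem _ h) (Set.mem_insert _ _)
      apply commute_of_gen
      intro v
      by_cases hvK : v ∈ K
      · have hvL : v ∉ L := fun h =>
          hdis v (Set.mem_insert_of_mem _ hvK) (Set.mem_insert_of_mem _ h)
        rw [hψn v hvL, hφK v hvK]
        simp only [map_mul, map_inv, hψn a haL, hψn v hvL]
      · by_cases hvL : v ∈ L
        · rw [hψK v hvL, hφn v hvK]
          simp only [map_mul, map_inv, hφn b hbK, hφn v hvK, hψK v hvL]
        · simp only [hψn v hvL, hφn v hvK]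
end

section
/- Let Γ be a finite simplicial graph with vertex set V such that Z = {v ∈ V : st(v) = V} is non-empty, and let A = A(Γ). Let a ∈ V ∖ Z and let π_{b,L} be a partial conjugation. Then the inner automorphism ι_a (given by w ↦ a⁻¹wa for all w ∈ A) commutes with π_{b,L} in Aut(A) if and only if a ∉ L. -/
open SimpleGraph

/-- Corollary 3.5. The inner automorphism `ι_a : w ↦ a⁻¹wa` commutes with
the partial conjugation `π_{b,L}` if and only if `a ∉ L`. -/
theorem inner_commute_pc_iff {V : Type} [Fintype V] (Γ : SimpleGraph V)
    (hZ : (Zset Γ).Nonempty) (a : V) (ha : a ∉ Zset Γ) (b : V) (L : Set V)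
    (ψ : MulAut (RAAG Γ)) (hψ : IsPartialConj Γ b L ψ) :
    Commute (MulAut.conj (raagGen Γ a)⁻¹) ψ ↔ a ∉ L := by
  classical
  obtain ⟨⟨c, hL⟩, hin, hout⟩ := hψ
  have hLsub : L ⊆ (Gstar Γ b)ᶜ := by
    rw [hL]; rintro x ⟨y, -, rfl⟩; exact y.2
  constructor
  · -- commute → a ∉ L
    intro hcomm haL
    have hab : a ∉ Gstar Γ b := hLsub haL
    simp only [Gstar, Set.mem_insert_iff, mem_neighborSet, not_or] at hab
    obtain ⟨hne, hnadj⟩ := hab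
    -- the retraction onto the free group on {a, b}
    set f : V → FreeGroup Bool :=
      fun v => if v = a then .of true else if v = b then .of false else 1 with hf
    have hrel : ∀ r ∈ raagRels Γ, FreeGroup.lift f r = 1 := by
      rintro r ⟨u, w, huw, rfl⟩
      have hcom : Commute (f u) (f w) := by
        by_cases hu : u = a
        · by_cases hw : w = a
          · rw [hu, hw]
          · by_cases hw2 : w = b
            · rw [hu, hw2] at huw; exact absurd huw.symm hnadj
            · have : f w = 1 := by simp [hf, hw, hw2]
              rw [this]; exact Commute.one_right _
        · by_cases hu2 : u = b
          · by_cases hw : w = a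
            · rw [hu2, hw] at huw; exact absurd huw hnadj
            · by_cases hw2 : w = b
              · rw [hu2, hw2]
              · have : f w = 1 := by simp [hf, hw, hw2]
                rw [this]; exact Commute.one_right _
          · have : f u = 1 := by simp [hf, hu, hu2]
            rw [this]; exact Commute.one_left _
      simp only [map_mul, map_inv, FreeGroup.lift_apply_of]
      rw [hcom.eq]; group
    set ρ : RAAG Γ →* FreeGroup Bool := PresentedGroup.toGroup hrel with hρ
    have hρa : ρ (raagGen Γ a) = FreeGroup.of true := by
      show ρ (PresentedGroup.of a) = _
      rw [hρ, PresentedGroup.toGroup.of]; simp [hf]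
    have hρb : ρ (raagGen Γ b) = FreeGroup.of false := by
      show ρ (PresentedGroup.of b) = _
      rw [hρ, PresentedGroup.toGroup.of]; simp [hf, Ne.symm hne]
    have hψa : ψ (raagGen Γ a) =
        (raagGen Γ b)⁻¹ * raagGen Γ a * raagGen Γ b := hin a haL
    have h1 := congrArg (fun e : MulAut (RAAG Γ) => e (raagGen Γ a)) hcomm
    simp only [MulAut.mul_apply, MulAut.conj_apply, inv_inv, inv_mul_cancel,
      one_mul, hψa] at h1
    have h2 := congrArg ρ h1
    simp only [map_mul, map_inv, hρa, hρb] at h2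
    exact absurd h2 (by decide)
  · -- a ∉ L → commute
    intro haL
    have hψa : ψ (raagGen Γ a) = raagGen Γ a := hout a haL
    show MulAut.conj (raagGen Γ a)⁻¹ * ψ = ψ * MulAut.conj (raagGen Γ a)⁻¹
    apply MulEquiv.toMonoidHom_injective
    apply PresentedGroup.ext
    intro v
    have hv : (PresentedGroup.of v : RAAG Γ) = raagGen Γ v := rfl
    simp only [MulEquiv.toMonoidHom_eq_coe, MonoidHom.coe_coe, MulAut.mul_apply,
      MulAut.conj_apply, inv_inv, hv]
    by_cases hvL : v ∈ L
    · rw [hin v hvL]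
      simp only [map_mul, map_inv, hψa, hin v hvL]
    · rw [hout v hvL]
      simp only [map_mul, map_inv, hψa, hout v hvL]
end

section
/- Let Γ be a finite simplicial graph with vertex set V containing a SIL: distinct non-adjacent vertices a, b and a connected component M of Γ∖(lk(a) ∩ lk(b)) containing neither a nor b. Let K be the connected component of Γ∖st(a) containing b and let L be the connected component of Γ∖st(b) containing a. Then M is a connected component of both Γ∖st(a) and Γ∖st(b), and the set {π_{a,K}, π_{a,M}, π_{b,L}, π_{b,M}} of partial conjugations is a δ-p-set. -/
open SimpleGraph

section SILAux

variable {V : Type} (Γ : SimpleGraph V)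

/-- The support of a connected component is closed under adjacency. -/
lemma supp_adj_closed {S : Set V} (c : (Γ.induce S).ConnectedComponent) {y z : S}
    (hy : y ∈ c.supp) (h : (Γ.induce S).Adj y z) : z ∈ c.supp := by
  rw [SimpleGraph.ConnectedComponent.mem_supp_iff] at hy ⊢
  rw [← hy]
  exact (SimpleGraph.ConnectedComponent.sound h.symm.reachable)

/-- If the support of a component of the subgraph induced on `S` is contained in a
subset `T ⊆ S`, then it is also (the support of) a component of the subgraph
induced on `T`. -/
lemma comp_mono {S T : Set V} (hTS : T ⊆ S)
    (c : (Γ.induce S).ConnectedComponent) (h : Subtype.val '' c.supp ⊆ T) :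
    IsCompOf Γ T (Subtype.val '' c.supp) := by
  obtain ⟨x, hx⟩ := c.exists_rep
  have hxsupp : x ∈ c.supp := by
    rw [SimpleGraph.ConnectedComponent.mem_supp_iff]; exact hx
  have hxT : (x : V) ∈ T := h ⟨x, hxsupp, rfl⟩
  -- forward: walks in `induce S` between vertices of the component transfer to `induce T`
  have key : ∀ (y z : S) (_ : (Γ.induce S).Walk y z),
      (Γ.induce S).connectedComponentMk z = c →
      ∃ (hy : (y : V) ∈ T) (hz : (z : V) ∈ T),
        (Γ.induce T).Reachable ⟨y, hy⟩ ⟨z, hz⟩ := by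
    intro y z w
    induction w with
    | @nil u =>
      intro hz
      have hyT : (u : V) ∈ T := h ⟨u, by
        rw [SimpleGraph.ConnectedComponent.mem_supp_iff]; exact hz, rfl⟩
      exact ⟨hyT, hyT, SimpleGraph.Reachable.refl _⟩
    | @cons u v z ha w ih =>
      intro hz
      obtain ⟨hv, hz', hr⟩ := ih hz
      have hmkv : (Γ.induce S).connectedComponentMk v = c := by
        rw [← hz]
        exact SimpleGraph.ConnectedComponent.sound w.reachable
      have hmku : (Γ.induce S).connectedComponentMk u = c := by
        rw [← hmkv]
        exact SimpleGraph.ConnectedComponent.sound ha.reachable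
      have hu : (u : V) ∈ T := h ⟨u, by
        rw [SimpleGraph.ConnectedComponent.mem_supp_iff]; exact hmku, rfl⟩
      have hadjT : (Γ.induce T).Adj ⟨u, hu⟩ ⟨v, hv⟩ := ha
      refine ⟨hu, hz', ?_⟩
      exact (hadjT.reachable).trans hr
  -- backward: walks in `induce T` transfer to `induce S`
  have back : ∀ (y z : T) (_ : (Γ.induce T).Walk y z),
      (Γ.induce S).Reachable ⟨y, hTS y.2⟩ ⟨z, hTS z.2⟩ := by
    intro y z w
    induction w with
    | nil => exact SimpleGraph.Reachable.refl _
    | @cons u v z ha w ih =>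
      have hadjS : (Γ.induce S).Adj ⟨u, hTS u.2⟩ ⟨v, hTS v.2⟩ := ha
      exact (hadjS.reachable).trans ih
  refine ⟨(Γ.induce T).connectedComponentMk ⟨x, hxT⟩, ?_⟩
  ext t
  constructor
  · rintro ⟨y, hy, rfl⟩
    rw [SimpleGraph.ConnectedComponent.mem_supp_iff] at hy
    have hr : (Γ.induce S).Reachable y x :=
      SimpleGraph.ConnectedComponent.exact (hy.trans hx.symm)
    obtain ⟨w⟩ := hr
    obtain ⟨hy', hx', hrT⟩ := key y x w hx
    refine ⟨⟨y, hy'⟩, ?_, rfl⟩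
    rw [SimpleGraph.ConnectedComponent.mem_supp_iff]
    have : (⟨(x : V), hx'⟩ : T) = ⟨x, hxT⟩ := rfl
    exact (SimpleGraph.ConnectedComponent.sound (this ▸ hrT))
  · rintro ⟨z, hz, rfl⟩
    rw [SimpleGraph.ConnectedComponent.mem_supp_iff] at hz
    have hr : (Γ.induce T).Reachable z ⟨x, hxT⟩ :=
      SimpleGraph.ConnectedComponent.exact hz
    obtain ⟨w⟩ := hr
    have hrS := back z ⟨x, hxT⟩ w
    have hxeq : (⟨((⟨(x : V), hxT⟩ : T) : V), hTS hxT⟩ : S) = x := rfl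
    refine ⟨⟨z, hTS z.2⟩, ?_, rfl⟩
    rw [SimpleGraph.ConnectedComponent.mem_supp_iff, ← hx]
    exact SimpleGraph.ConnectedComponent.sound (hxeq ▸ hrS)

/-- A SIL component `M` (not containing `a`) is a component of `Γ ∖ st(a)`. -/
lemma M_comp_of_sil (a b : V) (M : Set V)
    (hM : IsCompOf Γ (Γ.neighborSet a ∩ Γ.neighborSet b)ᶜ M) (haM : a ∉ M) :
    IsCompOf Γ (Gstar Γ a)ᶜ M := by
  obtain ⟨c, rfl⟩ := hM
  have haS : a ∈ (Γ.neighborSet a ∩ Γ.neighborSet b)ᶜ := by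
    intro hmem
    exact Γ.irrefl hmem.1
  have hsub : Subtype.val '' c.supp ⊆ (Gstar Γ a)ᶜ := by
    rintro t ⟨y, hy, rfl⟩
    intro hmem
    rw [Gstar, Set.mem_insert_iff] at hmem
    rcases hmem with h1 | h2
    · exact haM ⟨y, hy, h1⟩
    · -- `y` is adjacent to `a`, so `a` would lie in the same component
      have h2' : Γ.Adj a (y : V) := h2
      have hadjS : (Γ.induce (Γ.neighborSet a ∩ Γ.neighborSet b)ᶜ).Adj y ⟨a, haS⟩ :=
        h2'.symm
      exact haM ⟨⟨a, haS⟩, supp_adj_closed Γ c hy hadjS, rfl⟩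
  have hTS : (Gstar Γ a)ᶜ ⊆ (Γ.neighborSet a ∩ Γ.neighborSet b)ᶜ := by
    apply Set.compl_subset_compl.mpr
    intro v hv
    exact Set.mem_insert_of_mem a hv.1
  exact comp_mono Γ hTS c hsub

end SILAux

/-- from Proposition 5.7. A SIL `(a, b, M)`, together with the component
`K` of `Γ∖st(a)` containing `b` and the component `L` of `Γ∖st(b)` containing `a`, yields
that `M` is a component of both `Γ∖st(a)` and `Γ∖st(b)`, and
`{π_{a,K}, π_{a,M}, π_{b,L}, π_{b,M}}` is a δ-p-set. -/
theorem sil_gives_delta_p_set {V : Type} [Fintype V] (Γ : SimpleGraph V)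
    (a b : V) (hab : a ≠ b) (hadj : ¬Γ.Adj a b)
    (M : Set V) (hM : IsCompOf Γ (Γ.neighborSet a ∩ Γ.neighborSet b)ᶜ M)
    (haM : a ∉ M) (hbM : b ∉ M)
    (K : Set V) (hK : IsCompOf Γ (Gstar Γ a)ᶜ K) (hbK : b ∈ K)
    (L : Set V) (hL : IsCompOf Γ (Gstar Γ b)ᶜ L) (haL : a ∈ L) :
    IsCompOf Γ (Gstar Γ a)ᶜ M ∧ IsCompOf Γ (Gstar Γ b)ᶜ M ∧
      IsDeltaPSet Γ {(a, K), (a, M), (b, L), (b, M)} := by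
  have hMa : IsCompOf Γ (Gstar Γ a)ᶜ M := M_comp_of_sil Γ a b M hM haM
  have hMb : IsCompOf Γ (Gstar Γ b)ᶜ M := by
    apply M_comp_of_sil Γ b a M _ hbM
    rwa [Set.inter_comm]
  refine ⟨hMa, hMb, ?_, ?_, ?_⟩
  · -- Q ⊆ PCSet Γ
    rintro p (rfl | rfl | rfl | rfl)
    exacts [hK, hMa, hL, hMb]
  · -- cardinality condition
    intro v _
    have hKM : K ≠ M := fun h => hbM (h ▸ hbK)
    have hLM : L ≠ M := fun h => haM (h ▸ haL)
    by_cases hva : v = a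
    · subst hva
      right
      have heq : {p ∈ ({(v, K), (v, M), (b, L), (b, M)} : Set (V × Set V)) | p.1 = v}
          = {(v, K), (v, M)} := by
        ext p
        simp only [Set.mem_setOf_eq, Set.mem_insert_iff, Set.mem_singleton_iff]
        constructor
        · rintro ⟨rfl | rfl | rfl | rfl, h2⟩ <;> simp_all
        · rintro (rfl | rfl) <;> simp
      rw [heq]
      exact Set.ncard_pair (fun h => hKM (congrArg Prod.snd h))
    · by_cases hvb : v = b
      · subst hvb
        right
        have heq : {p ∈ ({(a, K), (a, M), (v, L), (v, M)} : Set (V × Set V)) | p.1 = v}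
            = {(v, L), (v, M)} := by
          ext p
          simp only [Set.mem_setOf_eq, Set.mem_insert_iff, Set.mem_singleton_iff]
          constructor
          · rintro ⟨rfl | rfl | rfl | rfl, h2⟩ <;> simp_all
          · rintro (rfl | rfl) <;> simp
        rw [heq]
        exact Set.ncard_pair (fun h => hLM (congrArg Prod.snd h))
      · left
        have heq : {p ∈ ({(a, K), (a, M), (b, L), (b, M)} : Set (V × Set V)) | p.1 = v}
            = ∅ := by
          ext p
          simp only [Set.mem_setOf_eq, Set.mem_insert_iff, Set.mem_singleton_iff,
            Set.mem_empty_iff_false, iff_false, not_and]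
          rintro (rfl | rfl | rfl | rfl) <;> intro h <;>
            first
            | exact hva h.symm
            | exact hvb h.symm
        rw [heq, Set.ncard_empty]
  · -- admissible partition
    refine ⟨{(a, K), (a, M)}, {(b, L), (b, M)}, ?_, ?_, ⟨(a, K), by simp⟩,
      ⟨(b, L), by simp⟩, ?_⟩
    · ext p
      simp only [Set.mem_union, Set.mem_insert_iff, Set.mem_singleton_iff]
      tauto
    · rw [Set.disjoint_left]
      rintro p (rfl | rfl) (h | h) <;>
        exact hab (congrArg Prod.fst h)
    · rintro p (rfl | rfl) q (rfl | rfl)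
      · exact Or.inl haL
      · exact Or.inr (Or.inl hbK)
      · exact Or.inl haL
      · exact Or.inr (Or.inr rfl)
end

section
/- Let Γ be a finite simplicial graph with vertex set V and let Z = {v ∈ V : st(v) = V}. Let U₁, …, U_p be the maximal subsets of V whose spanned full subgraphs are disconnected or non-dominating (maximal under inclusion among such subsets). Then V ∖ Z = U₁ ∪ ⋯ ∪ U_p, and consequently |V| − |Z| = 1 + Σ_{∅ ≠ I ⊆ {1,…,p}} (−1)^{|I|+1} (|⋂_{i∈I} U_i| − 1). -/
open SimpleGraph

-- auxiliary: any member of a Missing set is not in Zset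
lemma aux_not_z {V : Type} (Γ : SimpleGraph V) (Ui : Set V) (hm : Missing Γ Ui)
    {v : V} (hv : v ∈ Ui) : v ∉ Zset Γ := by
  intro hz
  have hz' : Gstar Γ v = Set.univ := hz
  have hdom : Dominating Γ Ui := by
    intro w
    by_cases hw : w = v
    · exact Or.inl (hw ▸ hv)
    · refine Or.inr ⟨v, hv, ?_⟩
      have hmem : w ∈ Gstar Γ v := hz' ▸ Set.mem_univ w
      rcases hmem with h | h
      · exact absurd h hw
      · exact (Γ.adj_symm h)
  have hconn : (Γ.induce Ui).Connected := by
    rw [SimpleGraph.connected_iff]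
    refine ⟨?_, ⟨⟨v, hv⟩⟩⟩
    have key : ∀ x : Ui, (Γ.induce Ui).Reachable x ⟨v, hv⟩ := by
      intro x
      by_cases hx : (x : V) = v
      · exact (Subtype.ext hx : x = ⟨v, hv⟩) ▸ SimpleGraph.Reachable.refl x
      · refine SimpleGraph.Adj.reachable ?_
        have hmem : (x : V) ∈ Gstar Γ v := hz' ▸ Set.mem_univ _
        rcases hmem with h | h
        · exact absurd h hx
        · exact (Γ.adj_symm h : Γ.Adj (x : V) v)
    exact fun x y => (key x).trans (key y).symm
  rcases hm with h | h
  · exact h hconn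
  · exact h hdom

/-- Lemma 5.1. If `U₁, …, U_p` are the maximal vertex subsets spanning
disconnected or non-dominating full subgraphs, then `V ∖ Z = U₁ ∪ ⋯ ∪ U_p` and the
inclusion–exclusion identity for `|V| − |Z|` holds. -/
theorem counting_dimensions {V : Type} [Fintype V] (Γ : SimpleGraph V)
    (p : ℕ) (U : Fin p → Set V) (hinj : Function.Injective U)
    (hbad : ∀ i, Missing Γ (U i))
    (hmax : ∀ i, ∀ W, Missing Γ W → U i ⊆ W → W = U i)
    (hall : ∀ W, Missing Γ W → (∀ W', Missing Γ W' → W ⊆ W' → W' = W) → ∃ i, W = U i) :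
    (Set.univ \ Zset Γ = ⋃ i, U i) ∧
    ((Fintype.card V : ℤ) - ((Zset Γ).ncard : ℤ) =
      1 + ∑ I ∈ Finset.univ.powerset.filter (fun I : Finset (Fin p) => I.Nonempty),
        (-1 : ℤ) ^ (I.card + 1) * (((⋂ i ∈ I, U i).ncard : ℤ) - 1)) := by
    classical
  -- every Missing set lies inside some U i
  have hmaxex : ∀ W, Missing Γ W → ∃ i, W ⊆ U i := by
    intro W hW
    have hfin : {X : Set V | Missing Γ X ∧ W ⊆ X}.Finite := Set.toFinite _
    obtain ⟨M, hM, hMmax⟩ := Set.Finite.exists_maximalFor id _ hfin ⟨W, hW, subset_rfl⟩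
    obtain ⟨i, hi⟩ := hall M hM.1 (fun W' hW' hsub =>
      Set.Subset.antisymm (hMmax ⟨hW', hM.2.trans hsub⟩ hsub) hsub)
    exact ⟨i, hi ▸ hM.2⟩
  -- part 1
  have hunion : Set.univ \ Zset Γ = ⋃ i, U i := by
    ext v
    simp only [Set.mem_diff, Set.mem_univ, true_and, Set.mem_iUnion]
    constructor
    · intro hv
      have hne : ∃ w, w ∉ Gstar Γ v := by
        by_contra h
        push_neg at h
        exact hv (Set.eq_univ_of_forall h)
      obtain ⟨w, hw⟩ := hne
      have hvw : v ≠ w := fun h => hw (h ▸ Set.mem_insert _ _)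
      have hadj : ¬Γ.Adj v w := fun h => hw (Set.mem_insert_of_mem _ h)
      have hmiss : Missing Γ ({v, w} : Set V) := by
        left
        intro hc
        have hnoadj : ∀ x y : ({v, w} : Set V), ¬(Γ.induce {v, w}).Adj x y := by
          rintro ⟨x, hx⟩ ⟨y, hy⟩ hxy
          have hΓ : Γ.Adj x y := hxy
          simp only [Set.mem_insert_iff, Set.mem_singleton_iff] at hx hy
          rcases hx with rfl | rfl <;> rcases hy with rfl | rfl
          · exact Γ.irrefl hΓ
          · exact hadj hΓ
          · exact hadj (Γ.adj_symm hΓ)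
          · exact Γ.irrefl hΓ
        have hr := hc.preconnected ⟨v, by simp⟩ ⟨w, by simp⟩
        have heq : (⟨v, by simp⟩ : ({v, w} : Set V)) = ⟨w, by simp⟩ := by
          obtain ⟨wk⟩ := hr
          cases wk with
          | nil => rfl
          | cons h _ => exact absurd h (hnoadj _ _)
        exact hvw (congrArg Subtype.val heq)
      obtain ⟨i, hi⟩ := hmaxex _ hmiss
      exact ⟨i, hi (Set.mem_insert _ _)⟩
    · rintro ⟨i, hi⟩
      exact aux_not_z Γ (U i) (hbad i) hi
  refine ⟨hunion, ?_⟩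
  -- p ≥ 1
  have hpne : (Finset.univ : Finset (Fin p)).Nonempty := by
    have hempty : Missing Γ (∅ : Set V) := by
      left
      intro hc
      obtain ⟨x⟩ := hc.nonempty
      exact x.2
    obtain ⟨i, _⟩ := hmaxex ∅ hempty
    exact ⟨i, Finset.mem_univ i⟩
  set S : Fin p → Finset V := fun i => (U i).toFinset with hS
  set F : Finset (Finset (Fin p)) :=
    Finset.univ.powerset.filter (fun I : Finset (Fin p) => I.Nonempty) with hF
  -- alternating sum of signs over nonempty subsets is 1
  have h0 : ∑ I ∈ (Finset.univ : Finset (Fin p)).powerset, (-1 : ℤ) ^ I.card = 0 :=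
    Finset.sum_powerset_neg_one_pow_card_of_nonempty hpne
  have hdecomp : (Finset.univ : Finset (Fin p)).powerset = insert ∅ F := by
    ext I
    simp only [Finset.mem_powerset, Finset.subset_univ, true_iff, Finset.mem_insert, hF,
      Finset.mem_filter]
    rcases I.eq_empty_or_nonempty with h | h <;> simp [h]
  have hFne : (∅ : Finset (Fin p)) ∉ F := by simp [hF]
  have hsign : ∑ I ∈ F, (-1 : ℤ) ^ I.card = -1 := by
    rw [hdecomp, Finset.sum_insert hFne] at h0
    simp only [Finset.card_empty, pow_zero] at h0
    linarith
  have hsign' : ∑ I ∈ F, (-1 : ℤ) ^ (I.card + 1) = 1 := by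
    have : ∑ I ∈ F, (-1 : ℤ) ^ (I.card + 1) = ∑ I ∈ F, -((-1 : ℤ) ^ I.card) :=
      Finset.sum_congr rfl (fun I _ => by ring)
    rw [this, Finset.sum_neg_distrib, hsign]
    ring
  -- inclusion-exclusion
  have hIE := Finset.inclusion_exclusion_card_biUnion (Finset.univ : Finset (Fin p)) S
  have hIE2 : (((Finset.univ : Finset (Fin p)).biUnion S).card : ℤ) =
      ∑ I ∈ F, (-1 : ℤ) ^ (I.card + 1) * ((⋂ i ∈ I, U i).ncard : ℤ) := by
    rw [hIE, ← Finset.sum_coe_sort F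
      (fun I => (-1 : ℤ) ^ (I.card + 1) * ((⋂ i ∈ I, U i).ncard : ℤ))]
    apply Finset.sum_congr rfl
    intro t _
    have ht : t.1.Nonempty := (Finset.mem_filter.1 t.2).2
    have hset : ((t.1.inf' ht S : Finset V) : Set V) = ⋂ i ∈ t.1, U i := by
      ext a
      simp [Finset.mem_inf', hS, Set.mem_toFinset]
    rw [← hset, Set.ncard_coe_finset]
  -- union card
  have hun2 : (⋃ i, U i) = ↑((Finset.univ : Finset (Fin p)).biUnion S) := by
    ext a
    simp [hS, Set.mem_toFinset]
  have hcardU : ((⋃ i, U i).ncard : ℤ) = (((Finset.univ : Finset (Fin p)).biUnion S).card : ℤ) := by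
    rw [hun2, Set.ncard_coe_finset]
  -- left-hand side
  have hle : (Zset Γ).ncard ≤ Fintype.card V := by
    have := Set.ncard_le_ncard (Set.subset_univ (Zset Γ)) (Set.toFinite _)
    rwa [Set.ncard_univ, Nat.card_eq_fintype_card] at this
  have hdiff : (Set.univ \ Zset Γ).ncard = Fintype.card V - (Zset Γ).ncard := by
    rw [Set.ncard_diff (Set.subset_univ _), Set.ncard_univ, Nat.card_eq_fintype_card]
  have hlhs : (Fintype.card V : ℤ) - ((Zset Γ).ncard : ℤ) = ((⋃ i, U i).ncard : ℤ) := by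
    rw [← hunion]
    omega
  -- sum splitting
  have hsum : ∑ I ∈ F, (-1 : ℤ) ^ (I.card + 1) * (((⋂ i ∈ I, U i).ncard : ℤ) - 1)
      = (∑ I ∈ F, (-1 : ℤ) ^ (I.card + 1) * ((⋂ i ∈ I, U i).ncard : ℤ))
        - ∑ I ∈ F, (-1 : ℤ) ^ (I.card + 1) := by
    rw [← Finset.sum_sub_distrib]
    exact Finset.sum_congr rfl (fun I _ => by ring)
  rw [hsum, hsign', hIE2.symm, hcardU.symm, hlhs]
  ring
end

section
/- Let Γ be a finite simplicial graph with vertex set V, and let U, W ⊆ V be subsets such that the full subgraph spanned by U is disconnected or non-dominating and the full subgraph spanned by W is disconnected or non-dominating. If U ∩ W is non-empty, then the full subgraph spanned by U ∩ W is disconnected or non-dominating. -/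
open SimpleGraph

/-- If `U` and `W` each span a disconnected or non-dominating full
subgraph and `U ∩ W ≠ ∅`, then `U ∩ W` spans a disconnected or non-dominating full
subgraph. -/
theorem missing_inter {V : Type} [Fintype V] (Γ : SimpleGraph V)
    (U W : Set V) (hU : Missing Γ U) (hW : Missing Γ W) (hUW : (U ∩ W).Nonempty) :
    Missing Γ (U ∩ W) := by
  by_contra h
  simp only [Missing, not_or, not_not] at h
  obtain ⟨hconn, hdom⟩ := h
  have hdomU : Dominating Γ U := by
    intro v
    rcases hdom v with hv | ⟨u, hu, hadj⟩
    · exact Or.inl hv.1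
    · exact Or.inr ⟨u, hu.1, hadj⟩
  have hconnU : (Γ.induce U).Connected := by
    rw [SimpleGraph.connected_iff]
    constructor
    · intro x y
      have key : ∀ z : U, ∃ w : ↥(U ∩ W), (Γ.induce U).Reachable z ⟨w, w.2.1⟩ := by
        intro z
        rcases hdom z with hz | ⟨u, hu, hadj⟩
        · exact ⟨⟨z, hz⟩, SimpleGraph.Reachable.refl _⟩
        · exact ⟨⟨u, hu⟩, SimpleGraph.Adj.reachable (by exact hadj)⟩
      obtain ⟨wx, hwx⟩ := key x
      obtain ⟨wy, hwy⟩ := key y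
      have hr : (Γ.induce U).Reachable ⟨wx, wx.2.1⟩ ⟨wy, wy.2.1⟩ :=
        (hconn wx wy).map
          (⟨fun z => ⟨z, z.2.1⟩, fun h => h⟩ : Γ.induce (U ∩ W) →g Γ.induce U)
      exact hwx.trans (hr.trans hwy.symm)
    · exact ⟨⟨hUW.choose, hUW.choose_spec.1⟩⟩
  rcases hU with h1 | h2
  · exact h1 hconnU
  · exact h2 hdomU
end
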